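/- Let n ≥ 1 and μ : (Fin n × Fin n × Fin n) →₀ ℕ. The monomial X^μ is torus-invariant if and only if each of the three marginal degree functions is constant: the function i ↦ ∑_{j,k} μ(i,j,k) is constant on Fin n, the function j ↦ ∑_{i,k} μ(i,j,k) is constant on Fin n, and the function k ↦ ∑_{i,j} μ(i,j,k) is constant on Fin n. -/
import Mathlib


open MvPolynomial

/-- The scaling substitution `S_{a,b,c}`: the `ℂ`-algebra endomorphism of
`MvPolynomial (Fin n × Fin n × Fin n) ℂ` determined by
`X (i,j,k) ↦ (a i * b j * c k) • X (i,j,k)`. -/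
noncomputable def scaleSub {n : ℕ} (a b c : Fin n → ℂˣ) :
    MvPolynomial (Fin n × Fin n × Fin n) ℂ →ₐ[ℂ] MvPolynomial (Fin n × Fin n × Fin n) ℂ :=
  aeval fun v : Fin n × Fin n × Fin n =>
    (((a v.1 : ℂ) * (b v.2.1 : ℂ) * (c v.2.2 : ℂ))) • X v

/-- A polynomial is torus-invariant if it is fixed by all scaling substitutions `S_{a,b,c}`
with `∏ a = ∏ b = ∏ c = 1`; this encodes the natural action of
`ST_n(ℂ) × ST_n(ℂ) × ST_n(ℂ)` on `ℂ^n ⊗ ℂ^n ⊗ ℂ^n`. -/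
def TorusInvariant {n : ℕ} (p : MvPolynomial (Fin n × Fin n × Fin n) ℂ) : Prop :=
  ∀ a b c : Fin n → ℂˣ,
    (∏ i, a i) = 1 → (∏ j, b j) = 1 → (∏ k, c k) = 1 → scaleSub a b c p = p

lemma factorA {n : ℕ} (a : Fin n → ℂˣ) (μ : (Fin n × Fin n × Fin n) →₀ ℕ) :
    (∏ v : Fin n × Fin n × Fin n, (a v.1 : ℂ) ^ μ v) =
      ∏ i, (a i : ℂ) ^ (∑ j, ∑ k, μ (i, j, k)) := by
  rw [Fintype.prod_prod_type]
  refine Finset.prod_congr rfl fun i _ => ?_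
  show ∏ y : Fin n × Fin n, (a i : ℂ) ^ μ (i, y) = _
  rw [Finset.prod_pow_eq_pow_sum, Fintype.sum_prod_type]

lemma factorB {n : ℕ} (b : Fin n → ℂˣ) (μ : (Fin n × Fin n × Fin n) →₀ ℕ) :
    (∏ v : Fin n × Fin n × Fin n, (b v.2.1 : ℂ) ^ μ v) =
      ∏ j, (b j : ℂ) ^ (∑ i, ∑ k, μ (i, j, k)) := by
  have h : (∏ v : Fin n × Fin n × Fin n, (b v.2.1 : ℂ) ^ μ v)
      = ∏ i, ∏ j, ∏ k, (b j : ℂ) ^ μ (i, j, k) := by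
    rw [Fintype.prod_prod_type]
    exact Finset.prod_congr rfl fun i _ => Fintype.prod_prod_type _
  rw [h, Finset.prod_comm]
  refine Finset.prod_congr rfl fun j _ => ?_
  rw [← Finset.prod_pow_eq_pow_sum]
  exact Finset.prod_congr rfl fun i _ => Finset.prod_pow_eq_pow_sum _ _ _

lemma factorC {n : ℕ} (c : Fin n → ℂˣ) (μ : (Fin n × Fin n × Fin n) →₀ ℕ) :
    (∏ v : Fin n × Fin n × Fin n, (c v.2.2 : ℂ) ^ μ v) =
      ∏ k, (c k : ℂ) ^ (∑ i, ∑ j, μ (i, j, k)) := by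
  have h : (∏ v : Fin n × Fin n × Fin n, (c v.2.2 : ℂ) ^ μ v)
      = ∏ i, ∏ k, ∏ j, (c k : ℂ) ^ μ (i, j, k) := by
    rw [Fintype.prod_prod_type]
    refine Finset.prod_congr rfl fun i _ => ?_
    rw [Fintype.prod_prod_type, Finset.prod_comm]
  rw [h, Finset.prod_comm]
  refine Finset.prod_congr rfl fun k _ => ?_
  rw [← Finset.prod_pow_eq_pow_sum]
  exact Finset.prod_congr rfl fun i _ => Finset.prod_pow_eq_pow_sum _ _ _

lemma scalar_split {n : ℕ} (a b c : Fin n → ℂˣ) (μ : (Fin n × Fin n × Fin n) →₀ ℕ) :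
    (∏ v : Fin n × Fin n × Fin n,
        ((a v.1 : ℂ) * (b v.2.1 : ℂ) * (c v.2.2 : ℂ)) ^ μ v) =
      (∏ i, (a i : ℂ) ^ (∑ j, ∑ k, μ (i, j, k))) *
      (∏ j, (b j : ℂ) ^ (∑ i, ∑ k, μ (i, j, k))) *
      (∏ k, (c k : ℂ) ^ (∑ i, ∑ j, μ (i, j, k))) := by
  simp only [mul_pow, Finset.prod_mul_distrib, factorA, factorB, factorC]

lemma scaleSub_monomial {n : ℕ} (a b c : Fin n → ℂˣ) (μ : (Fin n × Fin n × Fin n) →₀ ℕ) :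
    scaleSub a b c (monomial μ (1 : ℂ)) =
      C (∏ v : Fin n × Fin n × Fin n,
          ((a v.1 : ℂ) * (b v.2.1 : ℂ) * (c v.2.2 : ℂ)) ^ μ v) * monomial μ 1 := by
  rw [scaleSub, aeval_monomial, map_one, one_mul]
  rw [Finsupp.prod_fintype _ _ (fun v => pow_zero _)]
  simp only [smul_eq_C_mul, mul_pow, ← map_pow, Finset.prod_mul_distrib, ← map_prod]
  congr 1
  rw [monomial_eq, map_one, one_mul, Finsupp.prod_fintype _ _ (fun v => pow_zero _)]

lemma const_of_forall {n : ℕ} (m : Fin n → ℕ)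
    (h : ∀ a : Fin n → ℂˣ, (∏ i, a i) = 1 → (∏ i, (a i : ℂ) ^ m i) = 1)
    (i i' : Fin n) : m i = m i' := by
  by_cases hii : i = i'
  · rw [hii]
  · set u : ℂˣ := Units.mk0 (2 : ℂ) two_ne_zero with hu
    set a : Fin n → ℂˣ := fun x => if x = i then u else if x = i' then u⁻¹ else 1 with ha
    have key : ∀ (M : Type) [CommMonoid M] (f : Fin n → M),
        (∀ x, x ≠ i → x ≠ i' → f x = 1) → (∏ x, f x) = f i * f i' := by
      intro M _ f hf
      rw [← Finset.prod_subset (Finset.subset_univ ({i, i'} : Finset (Fin n)))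
        (fun x _ hx => by
          simp only [Finset.mem_insert, Finset.mem_singleton, not_or] at hx
          exact hf x hx.1 hx.2),
        Finset.prod_pair hii]
    have ha1 : (∏ x, a x) = 1 := by
      rw [key ℂˣ a (fun x hx hx' => by simp [ha, hx, hx'])]
      have hii' : i' ≠ i := Ne.symm hii
      simp [ha, hii, hii']
    have := h a ha1
    rw [key ℂ (fun x => (a x : ℂ) ^ m x) (fun x hx hx' => by simp [ha, hx, hx'])] at this
    have hii' : i' ≠ i := Ne.symm hii
    simp only [ha, if_pos rfl, if_neg hii, if_neg hii'] at this
    have h2 : (2 : ℂ) ^ m i * ((2 : ℂ) ^ m i')⁻¹ = 1 := by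
      simpa [hu, inv_pow] using this
    have h3 : (2 : ℂ) ^ m i = (2 : ℂ) ^ m i' :=
      (mul_inv_eq_one₀ (pow_ne_zero _ two_ne_zero)).mp h2
    have h4 : (2 : ℕ) ^ m i = (2 : ℕ) ^ m i' := by
      have := h3
      exact_mod_cast this
    exact Nat.pow_right_injective (le_refl 2) h4

lemma prod_of_const {n : ℕ} (hn : 1 ≤ n) (m : Fin n → ℕ)
    (hm : ∀ i i' : Fin n, m i = m i') (a : Fin n → ℂˣ) (ha : (∏ i, a i) = 1) :
    (∏ i, (a i : ℂ) ^ m i) = 1 := by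
  have i0 : Fin n := ⟨0, hn⟩
  have h1 : (∏ i, (a i : ℂ) ^ m i) = (∏ i, (a i : ℂ)) ^ m i0 := by
    rw [← Finset.prod_pow]
    exact Finset.prod_congr rfl fun i _ => by rw [hm i i0]
  rw [h1]
  have h2 : (∏ i, (a i : ℂ)) = 1 := by
    have := congrArg (Units.coeHom ℂ) ha
    simpa using this
  rw [h2, one_pow]

/-- A monomial `X^μ` is torus-invariant if and only if all three marginal degree
functions of `μ` are constant. -/
theorem monomial_invariant_iff_marginals_constant (n : ℕ) (hn : 1 ≤ n)
    (μ : (Fin n × Fin n × Fin n) →₀ ℕ) :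
    TorusInvariant (monomial μ (1 : ℂ)) ↔
      ((∀ i i' : Fin n, (∑ j : Fin n, ∑ k : Fin n, μ (i, j, k))
          = ∑ j : Fin n, ∑ k : Fin n, μ (i', j, k)) ∧
       (∀ j j' : Fin n, (∑ i : Fin n, ∑ k : Fin n, μ (i, j, k))
          = ∑ i : Fin n, ∑ k : Fin n, μ (i, j', k)) ∧
       (∀ k k' : Fin n, (∑ i : Fin n, ∑ j : Fin n, μ (i, j, k))
          = ∑ i : Fin n, ∑ j : Fin n, μ (i, j, k'))) := by
  have hmono : (monomial μ (1 : ℂ)) ≠ 0 := by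
    simp [MvPolynomial.monomial_eq_zero]
  have hscal : ∀ a b c : Fin n → ℂˣ,
      scaleSub a b c (monomial μ (1 : ℂ)) = monomial μ 1 ↔
      ((∏ i, (a i : ℂ) ^ (∑ j, ∑ k, μ (i, j, k))) *
       (∏ j, (b j : ℂ) ^ (∑ i, ∑ k, μ (i, j, k))) *
       (∏ k, (c k : ℂ) ^ (∑ i, ∑ j, μ (i, j, k)))) = 1 := by
    intro a b c
    rw [scaleSub_monomial, scalar_split]
    constructor
    · intro h
      have h' : C ((∏ i, (a i : ℂ) ^ (∑ j, ∑ k, μ (i, j, k))) *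
          (∏ j, (b j : ℂ) ^ (∑ i, ∑ k, μ (i, j, k))) *
          (∏ k, (c k : ℂ) ^ (∑ i, ∑ j, μ (i, j, k)))) * monomial μ 1
          = C 1 * monomial μ 1 := by
        rw [h, C_1, one_mul]
      exact MvPolynomial.C_injective _ ℂ (mul_right_cancel₀ hmono h')
    · intro h
      rw [h, C_1, one_mul]
  constructor
  · intro hinv
    refine ⟨?_, ?_, ?_⟩
    · refine const_of_forall _ (fun a ha => ?_)
      have := (hscal a 1 1).mp (hinv a 1 1 ha (by simp) (by simp))
      simpa using this
    · refine const_of_forall _ (fun b hb => ?_)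
      have := (hscal 1 b 1).mp (hinv 1 b 1 (by simp) hb (by simp))
      simpa using this
    · refine const_of_forall _ (fun c hc => ?_)
      have := (hscal 1 1 c).mp (hinv 1 1 c (by simp) (by simp) hc)
      simpa using this
  · rintro ⟨h1, h2, h3⟩ a b c ha hb hc
    rw [hscal a b c]
    rw [prod_of_const hn _ h1 a ha, prod_of_const hn _ h2 b hb,
      prod_of_const hn _ h3 c hc]
    ring
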